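/- Every right ideal of R = k_q[[x_1,…,x_n]] is closed in the J-adic topology: if I is a right ideal of R and a ∈ R is such that for every m ∈ ℕ there exists r ∈ I with a − r ∈ J^m, then a ∈ I. -/

import Mathlib

/-!
Common setup: `q`-commutative power series ring `R = k_q[[x_1,…,x_n]]` and
`q`-commutative Laurent series ring `L = k_q[[x_1^{±1},…,x_n^{±1}]]`, characterized
by their coefficient descriptions (twisted convolution multiplication).
-/

noncomputable section

/-- A multiplicatively antisymmetric `n × n` matrix over `k`:
`q_{ii} = 1` and `q_{ij} q_{ji} = 1`. -/
structure QMatrix (k : Type*) [Field k] (n : ℕ) where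
  q : Fin n → Fin n → k
  diag : ∀ i, q i i = 1
  antisym : ∀ i j, q i j * q j i = 1

namespace QMatrix

variable {k : Type*} [Field k] {n : ℕ} (Q : QMatrix k n)

lemma q_ne_zero (i j : Fin n) : Q.q i j ≠ 0 := fun h0 => by
  have h1 := Q.antisym i j
  rw [h0, zero_mul] at h1
  exact zero_ne_one h1

/-- The twisting weight `∏_{1 ≤ j < i ≤ n} q_{ij}^{u_i v_j}` (natural exponents), so that
`x^u · x^v = weight u v · x^{u+v}` in `R`. -/
def weight (u v : Fin n →₀ ℕ) : k :=
  ∏ i : Fin n, ∏ j : Fin n, if j < i then Q.q i j ^ (u i * v j) else 1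

/-- The twisting weight `∏_{1 ≤ j < i ≤ n} q_{ij}^{u_i v_j}` (integer exponents), so that
`x^u · x^v = zweight u v · x^{u+v}` in `L`. -/
def zweight (u v : Fin n → ℤ) : k :=
  ∏ i : Fin n, ∏ j : Fin n, if j < i then Q.q i j ^ (u i * v j) else 1

/-- The alternating bicharacter `σ(s,t) = ∏_{i,j} q_{ij}^{s_i t_j}`, so that
`x^s x^t = σ(s,t) x^t x^s` in `L`. -/
def sigma (s t : Fin n → ℤ) : k :=
  ∏ i : Fin n, ∏ j : Fin n, Q.q i j ^ (s i * t j)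

end QMatrix

/-- `R` is (a model of) the `q`-commutative power series ring `k_q[[x_1, …, x_n]]`:
its underlying `k`-vector space is that of all families of coefficients indexed by `ℕ^n`,
the constant series `1` is the multiplicative unit, and multiplication is given by the
twisted convolution: the coefficient of `x^s` in `f·g` is
`∑_{u+v=s} f_u g_v ∏_{1≤j<i≤n} q_{ij}^{u_i v_j}`. -/
structure IsQPowerSeriesRing {k : Type*} [Field k] {n : ℕ} (Q : QMatrix k n)
    (R : Type*) [Ring R] [Algebra k R] where
  coeff : R ≃ₗ[k] ((Fin n →₀ ℕ) → k)
  coeff_one : ∀ s, coeff 1 s = if s = 0 then 1 else 0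
  coeff_mul : ∀ f g : R, ∀ s, coeff (f * g) s =
    ∑ uv ∈ Finset.HasAntidiagonal.antidiagonal s, coeff f uv.1 * coeff g uv.2 * Q.weight uv.1 uv.2

namespace IsQPowerSeriesRing

variable {k : Type*} [Field k] {n : ℕ} {Q : QMatrix k n}
variable {R : Type*} [Ring R] [Algebra k R] (h : IsQPowerSeriesRing Q R)

/-- The monic monomial `x^s` of `R`. -/
def mono (s : Fin n →₀ ℕ) : R :=
  h.coeff.symm (fun t => if t = s then 1 else 0)

/-- The variable `x_i` of `R`. -/
def X (i : Fin n) : R := h.mono (Finsupp.single i 1)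

/-- The augmentation ideal `J = ⟨x_1, …, x_n⟩` of `R`, as a two-sided ideal. -/
def Jideal : TwoSidedIdeal R := TwoSidedIdeal.span (Set.range h.X)

/-- For `w ⊆ {1,…,n}`, the two-sided ideal `J_w = ⟨x_i : i ∈ w⟩` of `R`. -/
def Jw (w : Finset (Fin n)) : TwoSidedIdeal R :=
  TwoSidedIdeal.span {r : R | ∃ i ∈ w, r = h.X i}

/-- The action of `θ ∈ H = (kˣ)^n` on `R`, determined by
`x^s ↦ θ_1^{s_1} ⋯ θ_n^{s_n} x^s` and applied coefficientwise to series. -/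
def hAct (θ : Fin n → kˣ) (f : R) : R :=
  h.coeff.symm (fun s => (∏ i, (θ i : k) ^ (s i)) * h.coeff f s)

/-- A two-sided ideal of `R` is `H`-stable if it is mapped to itself by every element
of the torus `H = (kˣ)^n`. -/
def IsHStable (I : TwoSidedIdeal R) : Prop :=
  ∀ θ : Fin n → kˣ, h.hAct θ '' (I : Set R) = (I : Set R)

end IsQPowerSeriesRing

/-- A coefficient family `c : ℤ^n → k` is Laurent-bounded if `c s = 0` whenever some
coordinate of `s` is sufficiently negative, i.e. `∃ N, min(s_1,…,s_n) < -N → c s = 0`. -/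
def LaurentBounded {k : Type*} [Field k] {n : ℕ} (c : (Fin n → ℤ) → k) : Prop :=
  ∃ N : ℕ, ∀ s : Fin n → ℤ, (∃ i, s i < -(N : ℤ)) → c s = 0

/-- `L` is (a model of) the `q`-commutative Laurent series ring
`k_q[[x_1^{±1}, …, x_n^{±1}]]`: its elements correspond, `k`-linearly, to the
Laurent-bounded coefficient families indexed by `ℤ^n`, the constant series `1` is the
multiplicative unit, and multiplication is given by the twisted convolution. -/
structure IsQLaurentSeriesRing {k : Type*} [Field k] {n : ℕ} (Q : QMatrix k n)
    (L : Type*) [Ring L] [Algebra k L] where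
  coeff : L →ₗ[k] ((Fin n → ℤ) → k)
  coeff_injective : Function.Injective coeff
  coeff_bounded : ∀ f, LaurentBounded (coeff f)
  coeff_surjective : ∀ c, LaurentBounded c → ∃ f, coeff f = c
  coeff_one : ∀ s, coeff 1 s = if s = 0 then 1 else 0
  mul_support_finite : ∀ f g : L, ∀ s : Fin n → ℤ,
    (Function.support fun u => coeff f u * coeff g (s - u) * Q.zweight u (s - u)).Finite
  coeff_mul : ∀ f g : L, ∀ s : Fin n → ℤ, coeff (f * g) s =
    ∑ᶠ u : Fin n → ℤ, coeff f u * coeff g (s - u) * Q.zweight u (s - u)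

namespace IsQLaurentSeriesRing

variable {k : Type*} [Field k] {n : ℕ} {Q : QMatrix k n}
variable {L : Type*} [Ring L] [Algebra k L] (h : IsQLaurentSeriesRing Q L)

/-- The action of `θ ∈ H = (kˣ)^n` on `L`, determined by
`x^s ↦ θ_1^{s_1} ⋯ θ_n^{s_n} x^s` and applied coefficientwise to series. -/
def hAct (θ : Fin n → kˣ) (f : L) : L :=
  Classical.choose (h.coeff_surjective
    (fun s => (∏ i, ((θ i ^ (s i) : kˣ) : k)) * h.coeff f s)
    (by
      obtain ⟨N, hN⟩ := h.coeff_bounded f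
      exact ⟨N, fun s hs => by simp only []; rw [hN s hs, mul_zero]⟩))

/-- A two-sided ideal of `L` is `H`-stable if it is mapped to itself by every element
of the torus `H = (kˣ)^n`. -/
def IsHStable (I : TwoSidedIdeal L) : Prop :=
  ∀ θ : Fin n → kˣ, h.hAct θ '' (I : Set L) = (I : Set L)

end IsQLaurentSeriesRing

/-- A two-sided ideal `P` of a (possibly noncommutative) ring `A` is prime if `P ≠ A`
and whenever `I, J` are two-sided ideals with `IJ ⊆ P`, then `I ⊆ P` or `J ⊆ P`. -/
def IsPrimeTwoSided {A : Type*} [Ring A] (P : TwoSidedIdeal A) : Prop :=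
  P ≠ ⊤ ∧ ∀ I J : TwoSidedIdeal A, (∀ a ∈ I, ∀ b ∈ J, a * b ∈ P) → I ≤ P ∨ J ≤ P

/-- The product of two two-sided ideals: the two-sided ideal generated by products. -/
def tsMul {A : Type*} [Ring A] (I J : TwoSidedIdeal A) : TwoSidedIdeal A :=
  TwoSidedIdeal.span {x : A | ∃ a ∈ I, ∃ b ∈ J, x = a * b}

/-- Powers `I^m` of a two-sided ideal (with `I^0 = A`). -/
def tsPow {A : Type*} [Ring A] (I : TwoSidedIdeal A) : ℕ → TwoSidedIdeal A
  | 0 => ⊤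
  | m + 1 => tsMul (tsPow I m) I

namespace Stmt2Aux

open Finsupp

variable {n : ℕ}

abbrev μ (n : ℕ) := Fin n →₀ ℕ

def deg (s : μ n) : ℕ := ∑ i, s i

lemma deg_add (s t : μ n) : deg (s + t) = deg s + deg t := by
  simp [deg, Finset.sum_add_distrib]

lemma deg_eq_zero {s : μ n} (hs : deg s = 0) : s = 0 := by
  ext i
  have := Finset.sum_eq_zero_iff.mp hs i (Finset.mem_univ i)
  simpa using this

def toDL (s : μ n) : ℕ ×ₗ Lex (Fin n →₀ ℕ) := toLex (deg s, toLex s)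

lemma toDL_injective : Function.Injective (toDL (n := n)) := by
  intro s t hst
  have h2 : toLex s = toLex t := congrArg (fun x => (ofLex x).2) hst
  exact toLex.injective h2

lemma deg_mono {s t : μ n} (hst : toDL s ≤ toDL t) : deg s ≤ deg t := by
  rcases (Prod.Lex.le_iff).mp hst with hlt | ⟨heq, _⟩
  · exact le_of_lt hlt
  · exact le_of_eq heq

lemma toDL_add_lt {s t : μ n} (u : μ n) (hst : toDL s < toDL t) :
    toDL (s + u) < toDL (t + u) := by
  rw [toDL, toDL, Prod.Lex.lt_iff] at *
  rcases hst with hlt | ⟨heq, hlex⟩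
  · left; simpa [deg_add] using Nat.add_lt_add_right hlt (deg u)
  · right
    simp only [ofLex_toLex] at heq hlex ⊢
    refine ⟨by simp [deg_add, heq], ?_⟩
    exact add_lt_add_left hlex (toLex u)

lemma toDL_add_le {s t : μ n} (u : μ n) (hst : toDL s ≤ toDL t) :
    toDL (s + u) ≤ toDL (t + u) := by
  rcases lt_or_eq_of_le hst with hlt | heq
  · exact le_of_lt (toDL_add_lt u hlt)
  · rw [toDL_injective heq]

lemma finite_deg_le (d : ℕ) : {t : μ n | deg t ≤ d}.Finite := by
  classical
  set D : μ n := Finsupp.equivFunOnFinite.symm (fun _ => d) with hD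
  apply Set.Finite.subset (Finset.Iic D).finite_toSet
  intro t ht
  simp only [Finset.coe_Iic, Set.mem_Iic]
  intro i
  have h1 : t i ≤ deg t := Finset.single_le_sum (f := fun i => t i) (fun _ _ => Nat.zero_le _)
    (Finset.mem_univ i)
  have h2 : D i = d := by simp [hD]
  rw [h2]
  exact le_trans h1 ht

lemma finite_toDL_le (s₀ : μ n) : {t : μ n | toDL t ≤ toDL s₀}.Finite :=
  (finite_deg_le (deg s₀)).subset (fun _ ht => deg_mono ht)

lemma exists_toDL_min (S : Set (μ n)) (hS : S.Nonempty) :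
    ∃ s ∈ S, ∀ t ∈ S, toDL s ≤ toDL t := by
  obtain ⟨s₀, hs₀⟩ := hS
  set T := {t ∈ S | toDL t ≤ toDL s₀} with hT
  have hTfin : T.Finite := (finite_toDL_le s₀).subset (fun t ht => ht.2)
  have hTne : T.Nonempty := ⟨s₀, hs₀, le_refl _⟩
  obtain ⟨s, hsT, hmin⟩ := Set.exists_min_image T toDL hTfin hTne
  refine ⟨s, hsT.1, fun t ht => ?_⟩
  by_cases hts : toDL t ≤ toDL s₀
  · exact hmin t ⟨ht, hts⟩
  · exact le_trans hsT.2 (le_of_lt (not_le.mp hts))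


section Alg

variable {k : Type*} [Field k] {n : ℕ} {Q : QMatrix k n}
variable {R : Type*} [Ring R] [Algebra k R]

lemma weight_ne_zero (Q : QMatrix k n) (u v : μ n) : Q.weight u v ≠ 0 := by
  unfold QMatrix.weight
  rw [Finset.prod_ne_zero_iff]
  intro i _
  rw [Finset.prod_ne_zero_iff]
  intro j _
  split_ifs
  · exact pow_ne_zero _ (Q.q_ne_zero i j)
  · exact one_ne_zero

variable (h : IsQPowerSeriesRing Q R)

lemma coeff_mono (s t : μ n) : h.coeff (h.mono s) t = if t = s then 1 else 0 := by
  rw [IsQPowerSeriesRing.mono, LinearEquiv.apply_symm_apply]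

lemma coeff_smul (c : k) (f : R) (s : μ n) : h.coeff (c • f) s = c * h.coeff f s := by
  rw [map_smul]; rfl

lemma coeff_mul_Iic (f g : R) (u : μ n) :
    h.coeff (f * g) u
      = ∑ y ∈ Finset.Iic u, h.coeff f (u - y) * h.coeff g y * Q.weight (u - y) y := by
  rw [h.coeff_mul]
  refine Finset.sum_nbij' (fun p => p.2) (fun y => (u - y, y)) ?_ ?_ ?_ ?_ ?_
  · intro p hp
    rw [Finset.HasAntidiagonal.mem_antidiagonal] at hp
    rw [Finset.mem_Iic, ← hp]
    exact le_add_self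
  · intro y hy
    rw [Finset.mem_Iic] at hy
    rw [Finset.HasAntidiagonal.mem_antidiagonal]
    exact tsub_add_cancel_of_le hy
  · intro p hp
    rw [Finset.HasAntidiagonal.mem_antidiagonal] at hp
    have h1 : u - p.2 = p.1 := by
      ext i
      have := congrArg (fun x : μ n => x i) hp
      simp only [Finsupp.add_apply] at this
      simp only [Finsupp.tsub_apply]
      omega
    ext <;> simp [h1]
  · intro y _; rfl
  · intro p hp
    rw [Finset.HasAntidiagonal.mem_antidiagonal] at hp
    have h1 : u - p.2 = p.1 := by
      ext i
      have := congrArg (fun x : μ n => x i) hp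
      simp only [Finsupp.add_apply] at this
      simp only [Finsupp.tsub_apply]
      omega
    rw [h1]

lemma coeff_mul_smul_mono (f : R) (c : k) (t u : μ n) :
    h.coeff (f * (c • h.mono t)) u =
      if t ≤ u then h.coeff f (u - t) * c * Q.weight (u - t) t else 0 := by
  rw [coeff_mul_Iic h]
  have hcong : ∀ y ∈ Finset.Iic u,
      h.coeff f (u - y) * h.coeff (c • h.mono t) y * Q.weight (u - y) y
        = if y = t then h.coeff f (u - y) * c * Q.weight (u - y) y else 0 := by
    intro y _
    rw [coeff_smul, coeff_mono]
    split_ifs <;> ring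
  rw [Finset.sum_congr rfl hcong, Finset.sum_ite_eq' (Finset.Iic u) t _]
  simp [Finset.mem_Iic]

/-- Series whose coefficients vanish in total degree `< m`, as a two-sided ideal. -/
def Vdl (m : ℕ) : TwoSidedIdeal R := TwoSidedIdeal.mk'
  {f : R | ∀ s : μ n, deg s < m → h.coeff f s = 0}
  (fun s _ => by simp)
  (fun {x y} hx hy s hs => by rw [map_add]; simp [hx s hs, hy s hs])
  (fun {x} hx s hs => by rw [map_neg]; simp [hx s hs])
  (fun {x y} hy s hs => by
    rw [h.coeff_mul]
    apply Finset.sum_eq_zero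
    intro p hp
    rw [Finset.HasAntidiagonal.mem_antidiagonal] at hp
    have hdeg : deg p.1 + deg p.2 = deg s := by rw [← deg_add, hp]
    have : deg p.2 < m := lt_of_le_of_lt (by omega) hs
    rw [hy p.2 this, mul_zero, zero_mul])
  (fun {x y} hx s hs => by
    rw [h.coeff_mul]
    apply Finset.sum_eq_zero
    intro p hp
    rw [Finset.HasAntidiagonal.mem_antidiagonal] at hp
    have hdeg : deg p.1 + deg p.2 = deg s := by rw [← deg_add, hp]
    have : deg p.1 < m := lt_of_le_of_lt (by omega) hs
    rw [hx p.1 this, zero_mul, zero_mul])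

lemma mem_Vdl {m : ℕ} {f : R} :
    f ∈ Vdl h m ↔ ∀ s : μ n, deg s < m → h.coeff f s = 0 :=
  TwoSidedIdeal.mem_mk' _ _ _ _ _ _ _

lemma coeff_J_zero {f : R} (hf : f ∈ h.Jideal) : h.coeff f 0 = 0 := by
  have hf1 : f ∈ Vdl h 1 := by
    rw [IsQPowerSeriesRing.Jideal] at hf
    refine TwoSidedIdeal.mem_span_iff.mp hf (Vdl h 1) ?_
    rintro x ⟨i, rfl⟩
    rw [SetLike.mem_coe, mem_Vdl]
    intro s hs
    have hs0 : s = 0 := deg_eq_zero (by omega)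
    rw [hs0, IsQPowerSeriesRing.X, coeff_mono, if_neg]
    intro h0
    exact one_ne_zero (Finsupp.single_eq_zero.mp h0.symm)
  exact (mem_Vdl h).mp hf1 0 (by simp [deg])

lemma coeff_tsPow_eq_zero :
    ∀ m : ℕ, ∀ f ∈ tsPow h.Jideal m, ∀ s : μ n, deg s < m → h.coeff f s = 0 := by
  intro m
  induction m with
  | zero => intro f _ s hs; omega
  | succ m ih =>
    intro f hf s hs
    have hf' : f ∈ tsMul (tsPow h.Jideal m) h.Jideal := hf
    have hmem : f ∈ Vdl h (m + 1) := by
      refine TwoSidedIdeal.mem_span_iff.mp hf' (Vdl h (m + 1)) ?_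
      rintro x ⟨p, hp, b, hb, rfl⟩
      rw [SetLike.mem_coe, mem_Vdl]
      intro s hs
      rw [h.coeff_mul]
      apply Finset.sum_eq_zero
      intro q hq
      rw [Finset.HasAntidiagonal.mem_antidiagonal] at hq
      by_cases h2 : q.2 = 0
      · rw [h2, coeff_J_zero h hb, mul_zero, zero_mul]
      · have hd2 : deg q.2 ≠ 0 := fun h0 => h2 (deg_eq_zero h0)
        have hdeg : deg q.1 + deg q.2 = deg s := by rw [← deg_add, hq]
        have : deg q.1 < m := by omega
        rw [ih p hp q.1 this, zero_mul, zero_mul]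
    exact (mem_Vdl h).mp hmem s hs

end Alg

section Main

open scoped Classical

variable {k : Type*} [Field k] {n : ℕ} {Q : QMatrix k n}
variable {R : Type*} [Ring R] [Algebra k R]
variable (h : IsQPowerSeriesRing Q R) (I : AddSubgroup R)

/-- The `J`-adic closure of the right ideal `I`. -/
def Cset : Set R :=
  {f : R | ∀ m : ℕ, ∃ r ∈ I, ∀ s : μ n, deg s < m → h.coeff (f - r) s = 0}

lemma Cset_sub {f : R} (hf : f ∈ Cset h I) {x : R} (hx : x ∈ I) : f - x ∈ Cset h I := by
  intro m
  obtain ⟨r, hrI, hr⟩ := hf m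
  refine ⟨r - x, I.sub_mem hrI hx, fun s hs => ?_⟩
  have heq : f - x - (r - x) = f - r := by abel
  rw [heq]
  exact hr s hs

/-- Leading monomials of nonzero elements of `I`. -/
def Eset : Set (μ n) :=
  {s | ∃ g : R, g ∈ I ∧ h.coeff g s ≠ 0 ∧ ∀ t, h.coeff g t ≠ 0 → toDL s ≤ toDL t}

lemma min_mem_Eset {f : R} (hf : f ∈ Cset h I) {s : μ n} (hs : h.coeff f s ≠ 0)
    (hmin : ∀ t, h.coeff f t ≠ 0 → toDL s ≤ toDL t) : s ∈ Eset h I := by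
  obtain ⟨r, hrI, hr⟩ := hf (deg s + 1)
  have key : ∀ t : μ n, toDL t ≤ toDL s → h.coeff r t = h.coeff f t := by
    intro t ht
    have hd : deg t < deg s + 1 := Nat.lt_succ_of_le (deg_mono ht)
    have h0 := hr t hd
    rw [map_sub] at h0
    have h1 : h.coeff f t - h.coeff r t = 0 := h0
    have := sub_eq_zero.mp h1
    exact this.symm
  refine ⟨r, hrI, ?_, ?_⟩
  · rw [key s (le_refl _)]; exact hs
  · intro t ht
    by_contra hlt
    push_neg at hlt
    have hft : h.coeff f t = 0 := by
      by_contra h0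
      exact absurd (hmin t h0) (not_le.mpr hlt)
    rw [key t (le_of_lt hlt), hft] at ht
    exact ht rfl

lemma Eset_isPWO : (Eset h I).IsPWO := Set.isPWO_of_wellQuasiOrderedLE _

/-- Minimal elements of `Eset`. -/
def MinE : Set (μ n) := {b ∈ Eset h I | ∀ x ∈ Eset h I, ¬ x < b}

lemma MinE_finite : (MinE h I).Finite := by
  apply IsAntichain.finite_of_partiallyWellOrderedOn (r := ((· ≤ ·) : μ n → μ n → Prop))
  · intro b hb b' hb' hne hle
    exact hb'.2 b hb.1 (lt_of_le_of_ne hle hne)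
  · exact (Eset_isPWO h I).mono (fun x hx => hx.1)

lemma MinE_dom {s : μ n} (hs : s ∈ Eset h I) : ∃ b ∈ MinE h I, b ≤ s := by
  have hwf : {x ∈ Eset h I | x ≤ s}.IsWF := ((Eset_isPWO h I).isWF).mono (fun x hx => hx.1)
  have hne : {x ∈ Eset h I | x ≤ s}.Nonempty := ⟨s, hs, le_refl _⟩
  refine ⟨hwf.min hne, ⟨(hwf.min_mem hne).1, ?_⟩, (hwf.min_mem hne).2⟩
  intro x hx hlt
  exact hwf.not_lt_min hne ⟨hx, le_trans (le_of_lt hlt) (hwf.min_mem hne).2⟩ hlt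

/-- Finite basis of leading monomials. -/
def Bfin : Finset (μ n) := (MinE_finite h I).toFinset

/-- A chosen element of `I` with leading monomial `b`, for `b ∈ Eset`. -/
def gsel (b : μ n) : R := if hb : b ∈ Eset h I then hb.choose else 0

lemma gsel_mem (b : μ n) : gsel h I b ∈ I := by
  rw [gsel]
  split
  · next hb => exact hb.choose_spec.1
  · exact I.zero_mem

lemma gsel_spec {b : μ n} (hb : b ∈ Eset h I) :
    h.coeff (gsel h I b) b ≠ 0 ∧ ∀ t, h.coeff (gsel h I b) t ≠ 0 → toDL b ≤ toDL t := by
  rw [gsel, dif_pos hb]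
  exact ⟨hb.choose_spec.2.1, hb.choose_spec.2.2⟩

/-- One reduction step: data `(b, t, c, s)`. -/
def StepP (f : R) (p : μ n × μ n × k × μ n) : Prop :=
  p.1 ∈ Bfin h I ∧ p.2.2.2 = p.1 + p.2.1 ∧
    (∀ u, toDL u < toDL p.2.2.2 →
      h.coeff f u = 0 ∧ h.coeff (gsel h I p.1 * (p.2.2.1 • h.mono p.2.1)) u = 0) ∧
    h.coeff (f - gsel h I p.1 * (p.2.2.1 • h.mono p.2.1)) p.2.2.2 = 0 ∧
    h.coeff f p.2.2.2 ≠ 0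

lemma step_exists {f : R} (hfC : f ∈ Cset h I) (hf0 : f ≠ 0) : ∃ p, StepP h I f p := by
  classical
  have hcne : h.coeff f ≠ 0 := (LinearEquiv.map_ne_zero_iff h.coeff).mpr hf0
  obtain ⟨t1, ht1⟩ := Function.ne_iff.mp hcne
  have ht1' : h.coeff f t1 ≠ 0 := ht1
  obtain ⟨s, hsmem, hsmin⟩ := exists_toDL_min {t : μ n | h.coeff f t ≠ 0} ⟨t1, ht1'⟩
  have hsE : s ∈ Eset h I := min_mem_Eset h I hfC hsmem (fun t ht => hsmin t ht)
  obtain ⟨b, hbMin, hbs⟩ := MinE_dom h I hsE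
  obtain ⟨hgb, hgmin⟩ := gsel_spec h I hbMin.1
  set t0 : μ n := s - b with ht0def
  have hbt : b + t0 = s := add_tsub_cancel_of_le hbs
  have hw : Q.weight b t0 ≠ 0 := weight_ne_zero Q b t0
  set c : k := h.coeff f s / (h.coeff (gsel h I b) b * Q.weight b t0) with hcdef
  refine ⟨(b, t0, c, s), (MinE_finite h I).mem_toFinset.mpr hbMin, hbt.symm, ?_, ?_, hsmem⟩
  · intro u hu
    constructor
    · by_contra h0
      exact absurd (hsmin u h0) (not_le.mpr hu)
    · rw [coeff_mul_smul_mono h]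
      split_ifs with htu
      · have hg0 : h.coeff (gsel h I b) (u - t0) = 0 := by
          by_contra hg
          have h1 := toDL_add_le t0 (hgmin _ hg)
          rw [hbt, tsub_add_cancel_of_le htu] at h1
          exact absurd h1 (not_le.mpr hu)
        rw [hg0, zero_mul, zero_mul]
      · rfl
  · dsimp only
    have ht0s : t0 ≤ s := by
      rw [← hbt]; exact le_add_self
    have hstb : s - t0 = b := by
      rw [← hbt]
      ext i
      simp only [Finsupp.tsub_apply, Finsupp.add_apply]
      omega
    rw [map_sub, Pi.sub_apply, coeff_mul_smul_mono h, if_pos ht0s, hstb, hcdef]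
    field_simp
    ring

/-- The reduction data for `f`. -/
def stepdata (f : R) : μ n × μ n × k × μ n :=
  if hf : f ∈ Cset h I ∧ f ≠ 0 then (step_exists h I hf.1 hf.2).choose else (0, 0, 0, 0)

lemma stepdata_spec {f : R} (hf1 : f ∈ Cset h I) (hf2 : f ≠ 0) :
    StepP h I f (stepdata h I f) := by
  rw [stepdata, dif_pos (show f ∈ Cset h I ∧ f ≠ 0 from ⟨hf1, hf2⟩)]
  exact (step_exists h I hf1 hf2).choose_spec

/-- The element subtracted at each reduction step. -/
def nextr (f : R) : R :=
  gsel h I (stepdata h I f).1 * ((stepdata h I f).2.2.1 • h.mono (stepdata h I f).2.1)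

lemma nextr_mem (hIr : ∀ x ∈ I, ∀ r : R, x * r ∈ I) (f : R) : nextr h I f ∈ I :=
  hIr _ (gsel_mem h I _) _

variable (a : R)

/-- The sequence of successive reductions of `a`. -/
def Fseq : ℕ → R := fun m => Nat.rec a (fun _ x => x - nextr h I x) m

lemma Fseq_zero : Fseq h I a 0 = a := rfl

lemma Fseq_succ (m : ℕ) : Fseq h I a (m + 1) = Fseq h I a m - nextr h I (Fseq h I a m) := rfl

lemma Fseq_mem_C (hIr : ∀ x ∈ I, ∀ r : R, x * r ∈ I) (haC : a ∈ Cset h I) :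
    ∀ m, Fseq h I a m ∈ Cset h I := by
  intro m
  induction m with
  | zero => exact haC
  | succ m ih => exact Cset_sub h I ih (nextr_mem h I hIr _)

lemma Fseq_sum (m : ℕ) :
    a = Fseq h I a m + ∑ j ∈ Finset.range m, nextr h I (Fseq h I a j) := by
  induction m with
  | zero => simp [Fseq_zero]
  | succ m ih =>
    rw [Finset.sum_range_succ, Fseq_succ]
    conv_lhs => rw [ih]
    abel

lemma mem_of_closure (hIr : ∀ x ∈ I, ∀ r : R, x * r ∈ I) (haC : a ∈ Cset h I) : a ∈ I := by
  classical
  by_cases hz : ∃ m, Fseq h I a m = 0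
  · obtain ⟨m, hm⟩ := hz
    have hsum := Fseq_sum h I a m
    rw [hm, zero_add] at hsum
    rw [hsum]
    exact AddSubgroup.sum_mem I (fun j _ => nextr_mem h I hIr _)
  · push_neg at hz
    have hstep : ∀ m, StepP h I (Fseq h I a m) (stepdata h I (Fseq h I a m)) :=
      fun m => stepdata_spec h I (Fseq_mem_C h I a hIr haC m) (hz m)
    set F : ℕ → R := Fseq h I a with hF
    set bk : ℕ → μ n := fun m => (stepdata h I (F m)).1 with hbk
    set tk : ℕ → μ n := fun m => (stepdata h I (F m)).2.1 with htk
    set ck : ℕ → k := fun m => (stepdata h I (F m)).2.2.1 with hck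
    set sk : ℕ → μ n := fun m => (stepdata h I (F m)).2.2.2 with hsk
    have hnextr : ∀ m, nextr h I (F m) = gsel h I (bk m) * (ck m • h.mono (tk m)) :=
      fun m => rfl
    have hB : ∀ m, bk m ∈ Bfin h I := fun m => (hstep m).1
    have hsum : ∀ m, sk m = bk m + tk m := fun m => (hstep m).2.1
    have hvan : ∀ m u, toDL u < toDL (sk m) →
        h.coeff (F m) u = 0 ∧ h.coeff (nextr h I (F m)) u = 0 :=
      fun m => (hstep m).2.2.1
    have hcancel : ∀ m, h.coeff (F m - nextr h I (F m)) (sk m) = 0 :=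
      fun m => (hstep m).2.2.2.1
    have hlc : ∀ m, h.coeff (F m) (sk m) ≠ 0 := fun m => (hstep m).2.2.2.2
    have hFsucc : ∀ m, F (m + 1) = F m - nextr h I (F m) := fun m => rfl
    have hvan' : ∀ m u, toDL u ≤ toDL (sk m) → h.coeff (F (m + 1)) u = 0 := by
      intro m u hu
      rcases lt_or_eq_of_le hu with hlt | heq
      · rw [hFsucc, map_sub, Pi.sub_apply, (hvan m u hlt).1, (hvan m u hlt).2, sub_zero]
      · have hu' : u = sk m := toDL_injective heq
        rw [hu', hFsucc]
        exact hcancel m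
    have hmono : StrictMono (fun m => toDL (sk m)) := by
      apply strictMono_nat_of_lt_succ
      intro m
      by_contra hle
      push_neg at hle
      exact hlc (m + 1) (hvan' m _ hle)
    have hinj : Function.Injective sk := by
      intro m m' hmm
      exact hmono.injective (by simp only [hmm])
    have hesc : ∀ u : μ n, ∃ K, ∀ j, K ≤ j → toDL u < toDL (sk j) := by
      intro u
      have hfin : (sk ⁻¹' {t : μ n | toDL t ≤ toDL u}).Finite :=
        Set.Finite.preimage hinj.injOn (finite_toDL_le u)
      obtain ⟨M, hM⟩ := hfin.bddAbove
      refine ⟨M + 1, fun j hj => ?_⟩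
      by_contra hc
      push_neg at hc
      have hjM : j ≤ M := hM (show j ∈ sk ⁻¹' {t : μ n | toDL t ≤ toDL u} from hc)
      omega
    set Hc : μ n → μ n → k :=
      (fun b y => if hx : ∃ j, bk j = b ∧ tk j = y then ck hx.choose else 0) with hHc
    set H : μ n → R := fun b => h.coeff.symm (Hc b) with hH
    have hHcoeff : ∀ b y, h.coeff (H b) y = Hc b y := by
      intro b y
      rw [hH]
      simp only [LinearEquiv.apply_symm_apply]
    have hUniq : ∀ j j', bk j = bk j' → tk j = tk j' → j = j' := by
      intro j j' hb ht
      apply hinj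
      rw [hsum j, hsum j', hb, ht]
    set G : R := ∑ b ∈ Bfin h I, gsel h I b * H b with hG
    have hGI : G ∈ I := AddSubgroup.sum_mem I (fun b _ => hIr _ (gsel_mem h I b) _)
    suffices hGa : a = G by rw [hGa]; exact hGI
    apply h.coeff.injective
    funext u
    obtain ⟨K, hK⟩ := hesc u
    have ha_eq : h.coeff a u = ∑ j ∈ Finset.range K, h.coeff (nextr h I (F j)) u := by
      have h1 := congrArg (fun x => h.coeff x u) (Fseq_sum h I a K)
      simp only [map_add, Pi.add_apply, map_sum, Finset.sum_apply] at h1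
      rw [h1, (hvan K u (hK K (le_refl K))).1, zero_add]
    have hrj : ∀ j, h.coeff (nextr h I (F j)) u = ∑ y ∈ Finset.Iic u,
        h.coeff (gsel h I (bk j)) (u - y) * (ck j * if y = tk j then 1 else 0)
          * Q.weight (u - y) y := by
      intro j
      rw [hnextr j, coeff_mul_Iic h]
      apply Finset.sum_congr rfl
      intro y _
      rw [coeff_smul, coeff_mono]
    have hG_eq : h.coeff G u = ∑ j ∈ Finset.range K, h.coeff (nextr h I (F j)) u := by
      have step1 : h.coeff G u = ∑ b ∈ Bfin h I, ∑ y ∈ Finset.Iic u,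
          h.coeff (gsel h I b) (u - y) * h.coeff (H b) y * Q.weight (u - y) y := by
        rw [hG]
        simp only [map_sum, Finset.sum_apply]
        apply Finset.sum_congr rfl
        intro b _
        rw [coeff_mul_Iic h]
      have step2 : ∀ b ∈ Bfin h I,
          (∑ y ∈ Finset.Iic u,
            h.coeff (gsel h I b) (u - y) * h.coeff (H b) y * Q.weight (u - y) y)
          = ∑ j ∈ (Finset.range K).filter (fun j => bk j = b),
              h.coeff (nextr h I (F j)) u := by
        intro b _
        rw [Finset.sum_congr rfl (fun j hj => hrj j)]
        rw [Finset.sum_comm]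
        apply Finset.sum_congr rfl
        intro y hy
        have hyu : y ≤ u := Finset.mem_Iic.mp hy
        by_cases hx : ∃ j, bk j = b ∧ tk j = y
        · obtain ⟨hj0b, hj0t⟩ := hx.choose_spec
          set j₀ := hx.choose with hj₀
          have hHby : h.coeff (H b) y = ck j₀ := by
            rw [hHcoeff, hHc]
            simp only []
            rw [dif_pos hx]
          rw [hHby]
          rw [Finset.sum_eq_single j₀]
          · rw [hj0b, hj0t, if_pos rfl, mul_one]
          · intro j hj hne
            rcases Finset.mem_filter.mp hj with ⟨_, hjb⟩
            have : ¬ (y = tk j) := by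
              intro hyt
              exact hne (hUniq j j₀ (by rw [hjb, hj0b]) (by rw [← hyt, hj0t]))
            rw [if_neg this, mul_zero, mul_zero, zero_mul]
          · intro hj0not
            have hKj : K ≤ j₀ := by
              by_contra hlt
              push_neg at hlt
              exact hj0not (Finset.mem_filter.mpr ⟨Finset.mem_range.mpr hlt, hj0b⟩)
            have hult : toDL u < toDL (sk j₀) :=
              lt_of_lt_of_le (hK K (le_refl K)) (hmono.monotone hKj)
            have h0 : h.coeff (nextr h I (F j₀)) u = 0 := (hvan j₀ u hult).2
            have hform : h.coeff (nextr h I (F j₀)) u =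
                h.coeff (gsel h I (bk j₀)) (u - y) * (ck j₀ * if y = tk j₀ then 1 else 0)
                  * Q.weight (u - y) y := by
              rw [hnextr j₀, coeff_mul_smul_mono h, if_pos (show tk j₀ ≤ u from hj0t ▸ hyu)]
              rw [hj0t, if_pos rfl, mul_one]
            rw [← hform, h0]
        · have hHby : h.coeff (H b) y = 0 := by
            rw [hHcoeff, hHc]
            simp only []
            rw [dif_neg hx]
          rw [hHby, mul_zero, zero_mul]
          symm
          apply Finset.sum_eq_zero
          intro j hj
          rcases Finset.mem_filter.mp hj with ⟨_, hjb⟩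
          have : ¬ (y = tk j) := fun hy' => hx ⟨j, hjb, hy'.symm⟩
          rw [if_neg this, mul_zero, mul_zero, zero_mul]
      rw [step1, Finset.sum_congr rfl step2]
      exact Finset.sum_fiberwise_of_maps_to (fun j _ => hB j) _
    rw [ha_eq, hG_eq]

end Main

end Stmt2Aux

/-- Every right ideal of `R = k_q[[x_1,…,x_n]]` is closed in the
`J`-adic topology: if `I` is a right ideal of `R` and `a ∈ R` is such that for every
`m ∈ ℕ` there exists `r ∈ I` with `a − r ∈ J^m`, then `a ∈ I`. -/
theorem stmt_2 {k : Type*} [Field k] {n : ℕ} (hn : 0 < n) (Q : QMatrix k n)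
    (R : Type*) [Ring R] [Algebra k R] (h : IsQPowerSeriesRing Q R)
    (I : AddSubgroup R) (hIr : ∀ a ∈ I, ∀ r : R, a * r ∈ I)
    (a : R) (ha : ∀ m : ℕ, ∃ r ∈ I, a - r ∈ tsPow h.Jideal m) :
    a ∈ I := by
  have haC : a ∈ Stmt2Aux.Cset h I := by
    intro m
    obtain ⟨r, hrI, hr⟩ := ha m
    exact ⟨r, hrI, fun s hs => Stmt2Aux.coeff_tsPow_eq_zero h m _ hr s hs⟩
  exact Stmt2Aux.mem_of_closure h I a hIr haC

end
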